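/- Exactness of the interpolatory projection on rank-r matrices: if F = X S V^T with S ∈ ℝ^{r×r}, X ∈ ℝ^{n×r}, V ∈ ℝ^{m×r}, and I, J are index sets of size r with X(I,:) and V(J,:) invertible, then the interpolatory projection P (defined as P(H) = H(:,J)V(J,:)^{-T}V^T − X X(I,:)^{-1}H(I,J)V(J,:)^{-T}V^T + X X(I,:)^{-1}H(I,:)) satisfies P(F) = F. -/
import Mathlib


open Matrix

/-- Exactness of the interpolatory projection on rank-r matrices: if F = X S Vᵀ then P(F) = F. -/
theorem full_interpolatory_projection_exact
    (n m r : ℕ) (hr : 1 ≤ r) (hn : r ≤ n) (hm : r ≤ m)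
    (X : Matrix (Fin n) (Fin r) ℝ) (V : Matrix (Fin m) (Fin r) ℝ)
    (S : Matrix (Fin r) (Fin r) ℝ)
    (I : Fin r → Fin n) (J : Fin r → Fin m)
    (hI : Function.Injective I) (hJ : Function.Injective J)
    (hXI : IsUnit (X.submatrix I id)) (hVJ : IsUnit (V.submatrix J id))
    (F : Matrix (Fin n) (Fin m) ℝ) (hF : F = X * S * Vᵀ) :
    F.submatrix id J * ((V.submatrix J id)⁻¹)ᵀ * Vᵀ
        - X * (X.submatrix I id)⁻¹ * F.submatrix I J * ((V.submatrix J id)⁻¹)ᵀ * Vᵀ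
        + X * (X.submatrix I id)⁻¹ * F.submatrix I id
      = F := by
  have hXinv : (X.submatrix I id)⁻¹ * X.submatrix I id = 1 :=
    Matrix.nonsing_inv_mul _ ((Matrix.isUnit_iff_isUnit_det _).mp hXI)
  have hVinv : (V.submatrix J id)⁻¹ * V.submatrix J id = 1 :=
    Matrix.nonsing_inv_mul _ ((Matrix.isUnit_iff_isUnit_det _).mp hVJ)
  have hVT : (V.submatrix J id)ᵀ * ((V.submatrix J id)⁻¹)ᵀ = 1 := by
    rw [← Matrix.transpose_mul, hVinv, Matrix.transpose_one]
  have h1 : F.submatrix id J = X * S * (V.submatrix J id)ᵀ := by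
    subst hF; ext i j; simp [Matrix.mul_apply, Matrix.submatrix_apply]
  have h2 : F.submatrix I id = X.submatrix I id * S * Vᵀ := by
    subst hF; ext i j; simp [Matrix.mul_apply, Matrix.submatrix_apply]
  have h3 : F.submatrix I J = X.submatrix I id * S * (V.submatrix J id)ᵀ := by
    subst hF; ext i j; simp [Matrix.mul_apply, Matrix.submatrix_apply]
  rw [h1, h2, h3, hF]
  calc X * S * (V.submatrix J id)ᵀ * ((V.submatrix J id)⁻¹)ᵀ * Vᵀ
        - X * (X.submatrix I id)⁻¹ * (X.submatrix I id * S * (V.submatrix J id)ᵀ)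
            * ((V.submatrix J id)⁻¹)ᵀ * Vᵀ
        + X * (X.submatrix I id)⁻¹ * (X.submatrix I id * S * Vᵀ)
      = X * S * ((V.submatrix J id)ᵀ * ((V.submatrix J id)⁻¹)ᵀ) * Vᵀ
        - X * ((X.submatrix I id)⁻¹ * X.submatrix I id) * S
            * ((V.submatrix J id)ᵀ * ((V.submatrix J id)⁻¹)ᵀ) * Vᵀ
        + X * ((X.submatrix I id)⁻¹ * X.submatrix I id) * S * Vᵀ := by
        simp only [Matrix.mul_assoc]
    _ = X * S * Vᵀ := by
        rw [hVT, hXinv]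
        simp [Matrix.mul_assoc]
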